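/- Let A be a minimal acyclic DFA recognizing a nonempty finite language with longest word length n. For a word w ∈ Σ^n with w ∉ L(A), the DFA A_w^! that rejects exactly the words containing w as a subsequence has n+1 states and satisfies L(A) ⊆ L(A_w^!); hence A_w^! ∈ α(A). -/

import Mathlib

/-- State `q'` is reachable from state `q` in DFA `A`. -/
def ReachableFrom {α σ : Type} (A : DFA α σ) (q q' : σ) : Prop :=
  ∃ w : List α, A.evalFrom q w = q'

/-- A rejecting sink: a non-accepting state all of whose transitions are self-loops. -/
def IsRejectingSink {α σ : Type} (A : DFA α σ) (q : σ) : Prop :=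
  q ∉ A.accept ∧ ∀ a, A.step q a = q

/-- A DFA is acyclic if every cycle begins in a rejecting sink. -/
def DFAAcyclic {α σ : Type} (A : DFA α σ) : Prop :=
  ∀ (q : σ) (w : List α), w ≠ [] → A.evalFrom q w = q → IsRejectingSink A q

/-- A DFA is linear if reachability induces a strict linear order on states. -/
def DFALinear {α σ : Type} (A : DFA α σ) : Prop :=
  ∀ q q' : σ, q ≠ q' → Xor' (ReachableFrom A q q') (ReachableFrom A q' q)

/-- A DFA is minimal if no DFA with strictly fewer states recognizes the same language. -/
def DFAMinimal {α σ : Type} [Fintype σ] (A : DFA α σ) : Prop :=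
  ∀ n : ℕ, (∃ B : DFA α (Fin n), B.accepts = A.accepts) → Fintype.card σ ≤ n

/-- The index of a language: the number of states of its minimal DFA. -/
noncomputable def Ind {α : Type} (L : Language α) : ℕ :=
  sInf {n : ℕ | ∃ B : DFA α (Fin n), B.accepts = L}

/-- Safety language: once rejected, every extension is rejected. -/
def IsSafety {α : Type} (L : Language α) : Prop :=
  ∀ w y : List α, w ∉ L → (w ++ y) ∉ L

/-- `L` is an intersection of languages of DFAs each with at most `k` states. -/
def InterDecomp {α : Type} (L : Language α) (k : ℕ) : Prop :=
  ∃ (t : ℕ) (sz : Fin (t + 1) → ℕ) (B : ∀ i, DFA α (Fin (sz i))),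
    (∀ i, sz i ≤ k) ∧ ∀ w : List α, w ∈ L ↔ ∀ i, w ∈ (B i).accepts

/-- A DFA is composite if its language is an intersection of languages of DFAs each
with fewer states than its index. -/
def DFAComposite {α σ : Type} [Fintype σ] (A : DFA α σ) : Prop :=
  InterDecomp A.accepts (Ind A.accepts - 1)

/-- The compression-extension property for a DFA whose longest accepted word has length `n`. -/
def HasCEP {α σ : Type} (A : DFA α σ) (n : ℕ) : Prop :=
  ∀ w ∈ A.accepts, w.length = n →
    ∃ i l : ℕ, i + 2 ≤ n ∧ 2 ≤ l ∧ i + l ≤ n ∧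
      ∀ v : List α, v ≠ [] → (w.take i ++ w.drop (i + l)) ++ v ∉ A.accepts

/-- `L` is a union of languages of DFAs each with fewer than `k` states. -/
def UnionDecomp {α : Type} (L : Language α) (k : ℕ) : Prop :=
  ∃ (t : ℕ) (sz : Fin (t + 1) → ℕ) (B : ∀ i, DFA α (Fin (sz i))),
    (∀ i, sz i < k) ∧ ∀ w : List α, w ∈ L ↔ ∃ i, w ∈ (B i).accepts

/-- `L` is a union of intersections of languages of DFAs each with fewer than `k` states. -/
def DNFDecomp {α : Type} (L : Language α) (k : ℕ) : Prop :=
  ∃ (s : ℕ) (t : Fin (s + 1) → ℕ) (sz : ∀ i : Fin (s + 1), Fin (t i + 1) → ℕ)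
    (B : ∀ i j, DFA α (Fin (sz i j))),
    (∀ i j, sz i j < k) ∧ ∀ w : List α, w ∈ L ↔ ∃ i, ∀ j, w ∈ (B i j).accepts

open Classical in
/-- The subsequence-rejecting DFA `A_w^!`. -/
noncomputable def subDFA {α : Type} (n : ℕ) (w : List α) (hw : w.length = n) :
    DFA α (Fin (n + 1)) where
  step := fun i a =>
    if h : (i : ℕ) < n then
      (if a = w.get ⟨i, hw ▸ h⟩ then ⟨(i : ℕ) + 1, by omega⟩ else i)
    else i
  start := ⟨0, by omega⟩
  accept := {i | (i : ℕ) ≠ n}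

lemma subDFA_last_fixed {α : Type} {n : ℕ} {w : List α} (hw : w.length = n) :
    ∀ u : List α, (subDFA n w hw).evalFrom ⟨n, Nat.lt_succ_self n⟩ u
      = ⟨n, Nat.lt_succ_self n⟩ := by
  intro u
  induction u with
  | nil => rfl
  | cons a u ih =>
    have hstep : (subDFA n w hw).step ⟨n, Nat.lt_succ_self n⟩ a
        = ⟨n, Nat.lt_succ_self n⟩ := by
      simp [subDFA]
    show (subDFA n w hw).evalFrom ((subDFA n w hw).step ⟨n, Nat.lt_succ_self n⟩ a) u = _
    rw [hstep, ih]

lemma subDFA_eval {α : Type} {n : ℕ} {w : List α} (hw : w.length = n) :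
    ∀ (u : List α) (i : Fin (n + 1)),
      (subDFA n w hw).evalFrom i u = ⟨n, Nat.lt_succ_self n⟩ ↔ (w.drop i).Sublist u := by
  intro u
  induction u with
  | nil =>
    intro i
    constructor
    · intro h
      have : (i : ℕ) = n := by simpa [Fin.ext_iff] using h
      simp [List.drop_eq_nil_of_le, hw, this]
    · intro h
      have h' : w.drop i = [] := List.sublist_nil.mp h
      have : w.length ≤ (i : ℕ) := List.drop_eq_nil_iff.mp h'
      have hi : (i : ℕ) = n := by omega
      exact Fin.ext hi
  | cons a u ih =>
    intro i
    show (subDFA n w hw).evalFrom ((subDFA n w hw).step i a) u = _ ↔ _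
    by_cases hi : (i : ℕ) < n
    · have hiw : (i : ℕ) < w.length := by omega
      have hdrop : w.drop i = w[(i : ℕ)] :: w.drop ((i : ℕ) + 1) :=
        List.drop_eq_getElem_cons hiw
      by_cases ha : a = w[(i : ℕ)]'hiw
      · have hstep : (subDFA n w hw).step i a = ⟨(i : ℕ) + 1, by omega⟩ := by
          simp [subDFA, hi, ha]
        rw [hstep, ih]
        rw [hdrop, ha, List.cons_sublist_cons]
      · have hstep : (subDFA n w hw).step i a = i := by
          simp [subDFA, hi, ha]
        rw [hstep, ih]
        rw [hdrop]
        constructor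
        · intro h
          exact List.Sublist.cons a h
        · intro h
          rcases List.cons_sublist_cons'.mp h with h' | ⟨heq, _⟩
          · exact h'
          · exact absurd heq.symm ha
    · have hin : (i : ℕ) = n := by omega
      have hieq : i = ⟨n, Nat.lt_succ_self n⟩ := Fin.ext hin
      subst hieq
      have hstep : (subDFA n w hw).step ⟨n, Nat.lt_succ_self n⟩ a
          = ⟨n, Nat.lt_succ_self n⟩ := by simp [subDFA]
      rw [hstep, subDFA_last_fixed hw]
      simp [List.drop_eq_nil_of_le, hw]

lemma sink_evalFrom {α σ : Type} {A : DFA α σ} {q : σ} (h : IsRejectingSink A q) :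
    ∀ u : List α, A.evalFrom q u = q := by
  intro u
  induction u with
  | nil => rfl
  | cons a u ih =>
    show A.evalFrom (A.step q a) u = q
    rw [h.2 a, ih]

lemma eval_append' {α σ : Type} (A : DFA α σ) (u v : List α) :
    A.eval (u ++ v) = A.evalFrom (A.eval u) v := by
  simp only [DFA.eval]
  exact DFA.evalFrom_of_append _ _ _ _

/-- For a minimal linear acyclic DFA `A` (nonempty finite language, longest
word length `n`) and a rejected word `w` of length `n`, the DFA `A_w^!` rejecting exactly
the words containing `w` as a subsequence has `n + 1` states, its language contains `L(A)`,
and `n + 1 < ind(A)`; hence `A_w^! ∈ α(A)`. -/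
theorem stmt8 {α σ : Type} [Fintype σ] (A : DFA α σ)
    (hmin : DFAMinimal A) (hlin : DFALinear A) (hacyc : DFAAcyclic A)
    (hfin : {w : List α | w ∈ A.accepts}.Finite)
    (hne : ∃ w : List α, w ∈ A.accepts)
    (n : ℕ) (hbound : ∀ w ∈ A.accepts, List.length w ≤ n)
    (hmax : ∃ w ∈ A.accepts, List.length w = n)
    (w : List α) (hwlen : w.length = n) (hwnot : w ∉ A.accepts) :
    ∃ B : DFA α (Fin (n + 1)),
      (∀ u : List α, u ∈ B.accepts ↔ ¬ w.Sublist u) ∧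
      (∀ u : List α, u ∈ A.accepts → u ∈ B.accepts) ∧
      n + 1 < Ind A.accepts := by
  classical
  obtain ⟨x, hx, hxlen⟩ := hmax
  -- n ≥ 1
  have hn : 1 ≤ n := by
    by_contra h
    have hn0 : n = 0 := by omega
    have hx0 : x = [] := List.length_eq_zero_iff.mp (by omega)
    have hw0 : w = [] := List.length_eq_zero_iff.mp (by omega)
    exact hwnot (hw0 ▸ hx0 ▸ hx)
  refine ⟨subDFA n w hwlen, ?_, ?_, ?_⟩
  · -- language of B is non-supersequences of w
    intro u
    rw [DFA.mem_accepts]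
    have := subDFA_eval hwlen u (subDFA n w hwlen).start
    have hstart : ((subDFA n w hwlen).start : ℕ) = 0 := rfl
    constructor
    · intro h hsub
      have h' : ((subDFA n w hwlen).eval u : ℕ) ≠ n := h
      have h1 : (subDFA n w hwlen).evalFrom (subDFA n w hwlen).start u = ⟨n, Nat.lt_succ_self n⟩ :=
        (subDFA_eval hwlen u _).mpr (by simpa [hstart] using hsub)
      exact h' (by rw [show (subDFA n w hwlen).eval u = _ from h1])
    · intro hsub
      show ((subDFA n w hwlen).eval u : ℕ) ≠ n
      intro h
      have h1 : (subDFA n w hwlen).evalFrom (subDFA n w hwlen).start u = ⟨n, Nat.lt_succ_self n⟩ :=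
        Fin.ext h
      have h2 := (subDFA_eval hwlen u _).mp h1
      rw [hstart] at h2
      exact hsub (by simpa using h2)
  · -- L(A) ⊆ L(B)
    intro u hu
    have hulen : u.length ≤ n := hbound u hu
    rw [DFA.mem_accepts]
    intro hval
    have : (subDFA n w hwlen).evalFrom (subDFA n w hwlen).start u = ⟨n, Nat.lt_succ_self n⟩ :=
      Fin.ext hval
    have hsub := (subDFA_eval hwlen u _).mp this
    have hstart : ((subDFA n w hwlen).start : ℕ) = 0 := rfl
    rw [hstart] at hsub
    simp only [List.drop_zero] at hsub
    have hlen := hsub.length_le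
    have : w = u := hsub.eq_of_length (by omega)
    exact hwnot (this ▸ hu)
  · -- n + 1 < Ind A.accepts
    -- x is nonempty
    have hxne : x ≠ [] := by
      intro h; rw [h] at hxlen; simp at hxlen; omega
    set a : α := x.head hxne with ha
    -- find a rejecting sink via pigeonhole
    obtain ⟨k, m, hne', hkm⟩ :=
      Finite.exists_ne_map_eq_of_infinite (fun k : ℕ => A.eval (x ++ List.replicate k a))
    -- wlog k < m
    have hmain : ∃ k m : ℕ, k < m ∧
        A.eval (x ++ List.replicate k a) = A.eval (x ++ List.replicate m a) := by
      rcases Nat.lt_or_ge k m with h | h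
      · exact ⟨k, m, h, hkm⟩
      · exact ⟨m, k, by omega, hkm.symm⟩
    obtain ⟨k, m, hklt, heq⟩ := hmain
    set q : σ := A.eval (x ++ List.replicate k a) with hq
    have hcyc : A.evalFrom q (List.replicate (m - k) a) = q := by
      have h1 : x ++ List.replicate m a
          = (x ++ List.replicate k a) ++ List.replicate (m - k) a := by
        have hm : k + (m - k) = m := by omega
        rw [List.append_assoc, ← List.replicate_add, hm]
      have := heq
      rw [h1] at this
      rw [eval_append'] at this
      exact this.symm
    have hsink : IsRejectingSink A q :=
      hacyc q (List.replicate (m - k) a)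
        (by intro hnil; have := congrArg List.length hnil; simp at this; omega) hcyc
    -- the states along x are not sinks
    have hevalx : A.eval x ∈ A.accept := (DFA.mem_accepts A).mp hx
    have hnosink : ∀ i : ℕ, i ≤ n → ¬ IsRejectingSink A (A.eval (x.take i)) := by
      intro i hi hs
      have h1 : A.eval x = A.evalFrom (A.eval (x.take i)) (x.drop i) := by
        conv_lhs => rw [← List.take_append_drop i x]
        exact eval_append' _ _ _
      rw [h1, sink_evalFrom hs] at hevalx
      exact hs.1 hevalx
    -- the states along x are pairwise distinct
    have hdistinct : ∀ i j : ℕ, i < j → j ≤ n →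
        A.eval (x.take i) ≠ A.eval (x.take j) := by
      intro i j hij hj habs
      have hseg : x.take j = x.take i ++ (x.take j).drop i := by
        conv_lhs => rw [← List.take_append_drop i (x.take j)]
        rw [List.take_take, min_eq_left (by omega)]
      have hcyc2 : A.evalFrom (A.eval (x.take i)) ((x.take j).drop i)
          = A.eval (x.take i) := by
        conv_rhs => rw [habs, hseg]
        exact (eval_append' _ _ _).symm
      have hlen2 : ((x.take j).drop i).length = j - i := by
        simp [hxlen]; omega
      have : IsRejectingSink A (A.eval (x.take i)) :=
        hacyc _ _ (by intro h; rw [h] at hlen2; simp at hlen2; omega) hcyc2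
      exact hnosink i (by omega) this
    -- injective map Fin (n+2) → σ
    have hcard : n + 2 ≤ Fintype.card σ := by
      have hinj : Function.Injective
          (fun i : Fin (n + 2) => if (i : ℕ) < n + 1 then A.eval (x.take i) else q) := by
        intro i j hij
        simp only at hij
        by_cases hi : (i : ℕ) < n + 1 <;> by_cases hj : (j : ℕ) < n + 1
        · rw [if_pos hi, if_pos hj] at hij
          rcases Nat.lt_trichotomy (i : ℕ) (j : ℕ) with h | h | h
          · exact absurd hij (hdistinct i j h (by omega))
          · exact Fin.ext h
          · exact absurd hij.symm (hdistinct j i h (by omega))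
        · rw [if_pos hi, if_neg hj] at hij
          exact absurd (hij ▸ hsink) (hnosink i (by omega))
        · rw [if_neg hi, if_pos hj] at hij
          exact absurd (hij.symm ▸ hsink) (hnosink j (by omega))
        · exact Fin.ext (by omega)
      simpa using Fintype.card_le_of_injective _ hinj
    -- Ind A.accepts ≥ card σ
    have hSne : Fintype.card σ ∈ {k : ℕ | ∃ B : DFA α (Fin k), B.accepts = A.accepts} := by
      exact ⟨DFA.reindex (Fintype.equivFin σ) A, DFA.accepts_reindex A _⟩
    have hmem : Ind A.accepts ∈ {k : ℕ | ∃ B : DFA α (Fin k), B.accepts = A.accepts} :=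
      Nat.sInf_mem ⟨_, hSne⟩
    have hle : Fintype.card σ ≤ Ind A.accepts := hmin _ hmem
    omega
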